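/- Let X be a separable (equivalently, Lindelöf) metric space. If every countable family of closed balls B(xᵢ,rᵢ), i ∈ ℕ, with d(xᵢ,xⱼ) ≤ rᵢ + rⱼ for all i, j has nonempty intersection, then every (arbitrary, possibly uncountable) family of closed balls satisfying the same pairwise condition has nonempty intersection; that is, X is hyperconvex. -/
import Mathlib

/-- In a separable metric space, if every countable family of closed balls
satisfying the pairwise condition has nonempty intersection, then every
family of closed balls satisfying the pairwise condition has nonempty
intersection; that is, the space is hyperconvex. -/
theorem hyperconvex_of_countable_ball_intersection
    {X : Type*} [MetricSpace X] [TopologicalSpace.SeparableSpace X]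
    (hcount : ∀ (x : ℕ → X) (r : ℕ → ℝ), (∀ n, 0 ≤ r n) →
      (∀ i j, dist (x i) (x j) ≤ r i + r j) →
      (⋂ i, Metric.closedBall (x i) (r i)).Nonempty) :
    ∀ (I : Type) [Nonempty I] (x : I → X) (r : I → ℝ), (∀ i, 0 ≤ r i) →
      (∀ i j, dist (x i) (x j) ≤ r i + r j) →
      (⋂ i, Metric.closedBall (x i) (r i)).Nonempty := by
  intro I _ x r hr hd
  by_contra h
  rw [Set.not_nonempty_iff_eq_empty] at h
  haveI : Nonempty X := ⟨x (Classical.arbitrary I)⟩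
  haveI : SecondCountableTopology X :=
    UniformSpace.secondCountable_of_separable X
  have hcov : Set.univ ⊆ ⋃ i, (Metric.closedBall (x i) (r i))ᶜ := by
    intro p _
    by_contra hp
    simp only [Set.mem_iUnion, Set.mem_compl_iff, not_exists, not_not] at hp
    have : p ∈ ⋂ i, Metric.closedBall (x i) (r i) := Set.mem_iInter.mpr hp
    rw [h] at this
    exact this
  obtain ⟨f, hf⟩ := isLindelof_univ.indexed_countable_subcover
    (fun i => (Metric.closedBall (x i) (r i))ᶜ)
    (fun i => (Metric.isClosed_closedBall).isOpen_compl) hcov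
  obtain ⟨p, hp⟩ := hcount (fun n => x (f n)) (fun n => r (f n))
    (fun n => hr (f n)) (fun i j => hd (f i) (f j))
  have := hf (Set.mem_univ p)
  simp only [Set.mem_iUnion, Set.mem_compl_iff] at this
  obtain ⟨n, hn⟩ := this
  exact hn (Set.mem_iInter.mp hp n)
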